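/- Suppose additionally that a e^{Sx} s ≥ 0 for every x ≥ 0 and ∫_0^∞ a e^{Sx} s dx = 1. Then the folded kernel k(w) := a (e^{S(Δ−w)} + e^{S(Δ+w)}) (I − e^{2ΔS})^{−1} s satisfies k(w) ≥ 0 for all w ∈ [0,Δ] and ∫_0^Δ k(w) dw = 1; consequently, for every bounded measurable g : [0,Δ] → ℝ, |∫_0^Δ k(w) g(w) dw| ≤ sup_{w∈[0,Δ]} |g(w)|. -/

import Mathlib

open MeasureTheory Matrix

attribute [local instance] Matrix.normedAddCommGroup Matrix.normedSpace

/-- `e^{xS}` : the matrix exponential of `x • S`. -/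
noncomputable def mexp {p : ℕ} (S : Matrix (Fin p) (Fin p) ℝ) (x : ℝ) :
    Matrix (Fin p) (Fin p) ℝ := NormedSpace.exp (x • S)

namespace FK
open Filter Set

instance instPM {p : ℕ} : TopologicalSpace.PseudoMetrizableSpace (Matrix (Fin p) (Fin p) ℝ) :=
  inferInstanceAs (TopologicalSpace.PseudoMetrizableSpace (Fin p → Fin p → ℝ))

noncomputable instance instENAC {p : ℕ} : ENormedAddCommMonoid (Matrix (Fin p) (Fin p) ℝ) :=
  inferInstanceAs (ENormedAddCommMonoid (Fin p → Fin p → ℝ))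

variable {p : ℕ} (S : Matrix (Fin p) (Fin p) ℝ)

lemma mexp_zero : mexp S 0 = 1 := by
  rw [mexp, zero_smul, NormedSpace.exp_zero]

lemma mexp_add (x y : ℝ) : mexp S (x + y) = mexp S x * mexp S y := by
  rw [mexp, mexp, mexp, add_smul]
  exact Matrix.exp_add_of_commute _ _ (((Commute.refl S).smul_left x).smul_right y)

lemma mexp_pow (x : ℝ) (n : ℕ) : mexp S x ^ n = mexp S (n * x) := by
  have h : ((n : ℝ) * x) • S = n • (x • S) := by
    rw [← smul_smul, Nat.cast_smul_eq_nsmul]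
  rw [mexp, mexp, h, Matrix.exp_nsmul]

lemma mexp_continuous : Continuous (mexp S) := by
  letI : SeminormedRing (Matrix (Fin p) (Fin p) ℝ) := Matrix.linftyOpSemiNormedRing
  letI : NormedRing (Matrix (Fin p) (Fin p) ℝ) := Matrix.linftyOpNormedRing
  letI : NormedAlgebra ℝ (Matrix (Fin p) (Fin p) ℝ) := Matrix.linftyOpNormedAlgebra
  letI : NormedAlgebra ℚ (Matrix (Fin p) (Fin p) ℝ) := .restrictScalars ℚ ℝ _
  exact (@NormedSpace.exp_continuous (Matrix (Fin p) (Fin p) ℝ) _ _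
    (inferInstanceAs (CompleteSpace (Fin p → Fin p → ℝ)))).comp (continuous_id.smul continuous_const)

noncomputable def sandwich (a s : Fin p → ℝ) (M C : Matrix (Fin p) (Fin p) ℝ) :
    Matrix (Fin p) (Fin p) ℝ →ₗ[ℝ] ℝ where
  toFun B := (a ᵥ* (M * B * C)) ⬝ᵥ s
  map_add' B₁ B₂ := by simp [mul_add, add_mul, Matrix.vecMul_add, add_dotProduct]
  map_smul' c B := by
    have h : M * (c • B) * C = c • (M * B * C) := by
      rw [Matrix.mul_smul, Matrix.smul_mul]
    simp only [RingHom.id_apply, smul_eq_mul, ← Matrix.dotProduct_mulVec, h,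
      Matrix.smul_mulVec, dotProduct_smul]

@[simp] lemma sandwich_apply (a s : Fin p → ℝ) (M C B : Matrix (Fin p) (Fin p) ℝ) :
    sandwich a s M C B = (a ᵥ* (M * B * C)) ⬝ᵥ s := rfl

lemma vecMul_sum_dot (a s : Fin p → ℝ) {ι : Type*} (t : Finset ι)
    (f : ι → Matrix (Fin p) (Fin p) ℝ) :
    (a ᵥ* (∑ i ∈ t, f i)) ⬝ᵥ s = ∑ i ∈ t, (a ᵥ* f i) ⬝ᵥ s := by
  have h : ∀ X, (a ᵥ* X) ⬝ᵥ s = sandwich a s 1 1 X := fun X => by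
    rw [sandwich_apply, one_mul, mul_one]
  rw [h, map_sum]
  exact Finset.sum_congr rfl fun i _ => (h (f i)).symm

lemma integral_dot {α : Type*} [MeasurableSpace α] {μ : Measure α}
    {F : α → Matrix (Fin p) (Fin p) ℝ} (hF : Integrable F μ) (a s : Fin p → ℝ) :
    (∫ x, (a ᵥ* F x) ⬝ᵥ s ∂μ) = (a ᵥ* (∫ x, F x ∂μ)) ⬝ᵥ s := by
  have := (LinearMap.toContinuousLinearMap (sandwich a s 1 1)).integral_comp_comm hF
  have h1 : ∀ X, (LinearMap.toContinuousLinearMap (sandwich a s 1 1)) X = (a ᵥ* X) ⬝ᵥ s :=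
    fun X => by change (a ᵥ* (1 * X * 1)) ⬝ᵥ s = _; rw [one_mul, mul_one]
  exact (integral_congr_ae (Filter.Eventually.of_forall fun x => (h1 (F x)).symm)).trans
    (this.trans (h1 _))

lemma integral_mulLeft {α : Type*} [MeasurableSpace α] {μ : Measure α}
    {F : α → Matrix (Fin p) (Fin p) ℝ} (hF : Integrable F μ) (A : Matrix (Fin p) (Fin p) ℝ) :
    (∫ x, A * F x ∂μ) = A * ∫ x, F x ∂μ := by
  have := (LinearMap.toContinuousLinearMap (LinearMap.mulLeft ℝ A)).integral_comp_comm hF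
  exact this

lemma integral_mulRight {α : Type*} [MeasurableSpace α] {μ : Measure α}
    {F : α → Matrix (Fin p) (Fin p) ℝ} (hF : Integrable F μ) (A : Matrix (Fin p) (Fin p) ℝ) :
    (∫ x, F x * A ∂μ) = (∫ x, F x ∂μ) * A := by
  have := (LinearMap.toContinuousLinearMap (LinearMap.mulRight ℝ A)).integral_comp_comm hF
  exact this

end FK
/-- The folded kernel `k(w) = a (e^{S(Δ-w)} + e^{S(Δ+w)}) (I - e^{2ΔS})⁻¹ s`. -/
noncomputable def foldedKernel {p : ℕ} (S : Matrix (Fin p) (Fin p) ℝ)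
    (a s : Fin p → ℝ) (Δ w : ℝ) : ℝ :=
  (a ᵥ* (mexp S (Δ - w) + mexp S (Δ + w)) ᵥ* (1 - mexp S (2 * Δ))⁻¹) ⬝ᵥ s

/-- if `x ↦ a e^{Sx} s` is a probability density on `[0,∞)`, then the
folded kernel is a probability density on `[0,Δ]`, hence integrating a bounded
measurable `g` against it is bounded by `sup |g|`. -/
theorem folded_kernel_is_density
    (p : ℕ) (hp : 1 ≤ p) (S : Matrix (Fin p) (Fin p) ℝ)
    (hS0 : Filter.Tendsto (fun x : ℝ => mexp S x) Filter.atTop (nhds 0))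
    (hSint : IntegrableOn (fun x : ℝ => ‖mexp S x‖) (Set.Ici 0))
    (a s : Fin p → ℝ) (Δ : ℝ) (hΔ : 0 < Δ)
    (hnn : ∀ x : ℝ, 0 ≤ x → 0 ≤ (a ᵥ* mexp S x) ⬝ᵥ s)
    (hone : (∫ x in Set.Ici (0 : ℝ), (a ᵥ* mexp S x) ⬝ᵥ s) = 1) :
    (∀ w ∈ Set.Icc (0 : ℝ) Δ, 0 ≤ foldedKernel S a s Δ w)
    ∧ (∫ w in Set.Icc (0 : ℝ) Δ, foldedKernel S a s Δ w) = 1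
    ∧ ∀ g : ℝ → ℝ, Measurable g → (∃ C : ℝ, ∀ w ∈ Set.Icc (0 : ℝ) Δ, |g w| ≤ C) →
        |∫ w in Set.Icc (0 : ℝ) Δ, foldedKernel S a s Δ w * g w|
          ≤ ⨆ w : Set.Icc (0 : ℝ) Δ, |g (w : ℝ)| := by
  classical
  have hFcont : Continuous (mexp S) := FK.mexp_continuous S
  have hFint : IntegrableOn (mexp S) (Set.Ici (0:ℝ)) := by
    exact hSint.mono' hFcont.aestronglyMeasurable (Filter.Eventually.of_forall fun x => le_rfl)
  set A : Matrix (Fin p) (Fin p) ℝ := mexp S (2 * Δ) with hA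
  have hApow : ∀ n : ℕ, A ^ n = mexp S (n * (2 * Δ)) := fun n => FK.mexp_pow S _ n
  have hA0 : Filter.Tendsto (fun n : ℕ => A ^ n) Filter.atTop (nhds 0) := by
    simp only [hApow]
    exact hS0.comp ((tendsto_natCast_atTop_atTop (R := ℝ)).atTop_mul_const (by linarith))
  have hgeom : ∀ N : ℕ, (∑ i ∈ Finset.range N, A ^ i) * ((1 : Matrix (Fin p) (Fin p) ℝ) - A)
      = 1 - A ^ N := by
    intro N
    have h := geom_sum_mul A N
    rw [← neg_sub A (1 : Matrix (Fin p) (Fin p) ℝ), mul_neg, h, neg_sub]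
  have hdetne : ((1 : Matrix (Fin p) (Fin p) ℝ) - A).det ≠ 0 := by
    have hcont : Continuous fun B : Matrix (Fin p) (Fin p) ℝ =>
        ((1 : Matrix (Fin p) (Fin p) ℝ) - B).det :=
      (continuous_const.sub continuous_id).matrix_det
    have h1 : Filter.Tendsto (fun n : ℕ => ((1 : Matrix (Fin p) (Fin p) ℝ) - A ^ n).det)
        Filter.atTop (nhds 1) := by
      have := (hcont.tendsto 0).comp hA0
      simpa [Function.comp_def] using this
    obtain ⟨N, hN⟩ := (h1.eventually_ne one_ne_zero).exists
    intro h
    apply hN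
    rw [← hgeom N, Matrix.det_mul, h, mul_zero]
  have hdet : IsUnit ((1 : Matrix (Fin p) (Fin p) ℝ) - A).det := isUnit_iff_ne_zero.mpr hdetne
  set C : Matrix (Fin p) (Fin p) ℝ := ((1 : Matrix (Fin p) (Fin p) ℝ) - A)⁻¹ with hC
  have hC1 : ((1 : Matrix (Fin p) (Fin p) ℝ) - A) * C = 1 := Matrix.mul_nonsing_inv _ hdet
  have hdecomp : ∀ N : ℕ, C = (∑ i ∈ Finset.range N, A ^ i) + A ^ N * C := by
    intro N
    have h2 : (∑ i ∈ Finset.range N, A ^ i) = (1 - A ^ N) * C := by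
      calc (∑ i ∈ Finset.range N, A ^ i)
          = (∑ i ∈ Finset.range N, A ^ i) * (((1 : Matrix (Fin p) (Fin p) ℝ) - A) * C) := by
            rw [hC1, mul_one]
        _ = ((∑ i ∈ Finset.range N, A ^ i) * ((1 : Matrix (Fin p) (Fin p) ℝ) - A)) * C := by
            rw [mul_assoc]
        _ = (1 - A ^ N) * C := by rw [hgeom N]
    rw [h2, sub_mul, one_mul, sub_add_cancel]
  -- Part 1: nonnegativity
  have hpos : ∀ w ∈ Set.Icc (0:ℝ) Δ, 0 ≤ foldedKernel S a s Δ w := by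
    intro w hw
    set M : Matrix (Fin p) (Fin p) ℝ := mexp S (Δ - w) + mexp S (Δ + w) with hM
    have hk : foldedKernel S a s Δ w = (a ᵥ* (M * C)) ⬝ᵥ s := by
      rw [foldedKernel, Matrix.vecMul_vecMul]
    set φ : Matrix (Fin p) (Fin p) ℝ →ₗ[ℝ] ℝ := FK.sandwich a s M C with hφdef
    have hφc : Continuous φ := φ.continuous_of_finiteDimensional
    have hterm : ∀ i : ℕ, 0 ≤ (a ᵥ* (M * A ^ i)) ⬝ᵥ s := by
      intro i
      have hMA : M * A ^ i = mexp S ((Δ - w) + i * (2*Δ)) + mexp S ((Δ + w) + i * (2*Δ)) := by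
        rw [hApow i, hM, add_mul, ← FK.mexp_add, ← FK.mexp_add]
      have hi0 : (0:ℝ) ≤ (i:ℝ) * (2*Δ) := by positivity
      have h1 : (0:ℝ) ≤ (Δ - w) + i * (2*Δ) := by
        have := hw.2; linarith
      have h2 : (0:ℝ) ≤ (Δ + w) + i * (2*Δ) := by
        have := hw.1; linarith
      rw [hMA, Matrix.vecMul_add, add_dotProduct]
      exact add_nonneg (hnn _ h1) (hnn _ h2)
    have hkey : ∀ N : ℕ, foldedKernel S a s Δ w
        = (∑ i ∈ Finset.range N, (a ᵥ* (M * A ^ i)) ⬝ᵥ s) + φ (A ^ N) := by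
      intro N
      rw [hk]
      conv_lhs => rw [hdecomp N]
      rw [mul_add, Matrix.vecMul_add, add_dotProduct]
      congr 1
      · rw [Finset.mul_sum, FK.vecMul_sum_dot]
      · rw [hφdef, FK.sandwich_apply, mul_assoc]
    have hr : Filter.Tendsto (fun N : ℕ => φ (A ^ N)) Filter.atTop (nhds 0) := by
      have := (hφc.tendsto 0).comp hA0
      simpa [Function.comp_def] using this
    have hlim : Filter.Tendsto (fun N : ℕ => ∑ i ∈ Finset.range N, (a ᵥ* (M * A ^ i)) ⬝ᵥ s)
        Filter.atTop (nhds (foldedKernel S a s Δ w)) := by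
      have h := (tendsto_const_nhds (x := foldedKernel S a s Δ w)
        (f := (Filter.atTop : Filter ℕ))).sub hr
      rw [sub_zero] at h
      refine h.congr fun N => ?_
      rw [hkey N]; ring
    exact ge_of_tendsto' hlim fun N => Finset.sum_nonneg fun i _ => hterm i
  -- integral identities
  set J : Matrix (Fin p) (Fin p) ℝ := ∫ x in Set.Ici (0:ℝ), mexp S x with hJ
  have hJ1 : (a ᵥ* J) ⬝ᵥ s = 1 := by
    rw [hJ, ← FK.integral_dot hFint a s, hone]
  have hpre : (fun x : ℝ => x + 2*Δ) ⁻¹' (Set.Ici (2*Δ)) = Set.Ici 0 := by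
    ext x
    simp [le_add_iff_nonneg_left]
  have hshift : (∫ x in Set.Ici (2*Δ), mexp S x) = A * J := by
    have hmap : Measure.map (fun x : ℝ => x + 2*Δ) volume = volume :=
      map_add_right_eq_self volume (2*Δ)
    have e : (ℝ ≃ᵐ ℝ) := MeasurableEquiv.addRight (2*Δ)
    calc (∫ x in Set.Ici (2*Δ), mexp S x)
        = ∫ x in Set.Ici (2*Δ), mexp S x
            ∂(Measure.map (MeasurableEquiv.addRight (2*Δ)) volume) := by
          rw [show ((MeasurableEquiv.addRight (2*Δ) : ℝ ≃ᵐ ℝ) : ℝ → ℝ)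
              = fun x : ℝ => x + 2*Δ from rfl, hmap]
      _ = ∫ x in (MeasurableEquiv.addRight (2*Δ)) ⁻¹' (Set.Ici (2*Δ)), mexp S ((x + 2*Δ)) := by
          rw [setIntegral_map_equiv]
          rfl
      _ = ∫ x in Set.Ici (0:ℝ), mexp S (x + 2*Δ) := by
          rw [show (MeasurableEquiv.addRight (2*Δ)) ⁻¹' (Set.Ici (2*Δ)) = Set.Ici (0:ℝ) from hpre]
      _ = ∫ x in Set.Ici (0:ℝ), A * mexp S x := by
          refine setIntegral_congr_fun measurableSet_Ici fun x _ => ?_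
          rw [add_comm, FK.mexp_add, hA]
      _ = A * J := by rw [FK.integral_mulLeft hFint, hJ]
  have hsubIco : Set.Ico (0:ℝ) (2*Δ) ⊆ Set.Ici (0:ℝ) := Set.Ico_subset_Ici_self
  have hsubIci : Set.Ici (2*Δ) ⊆ Set.Ici (0:ℝ) := Set.Ici_subset_Ici.mpr (by linarith)
  have hdisj : Disjoint (Set.Ico (0:ℝ) (2*Δ)) (Set.Ici (2*Δ)) := by
    apply Set.disjoint_left.mpr
    intro x hx hx'
    exact absurd hx.2 (not_lt.mpr hx')
  have hunion : Set.Ico (0:ℝ) (2*Δ) ∪ Set.Ici (2*Δ) = Set.Ici (0:ℝ) :=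
    Set.Ico_union_Ici_eq_Ici (by linarith)
  have hsplit : J = (∫ x in Set.Ico (0:ℝ) (2*Δ), mexp S x) + ∫ x in Set.Ici (2*Δ), mexp S x := by
    rw [hJ, ← hunion]
    exact setIntegral_union hdisj measurableSet_Ici (hFint.mono_set hsubIco)
      (hFint.mono_set hsubIci)
  have hIco : (∫ x in Set.Ico (0:ℝ) (2*Δ), mexp S x) = J - A * J := by
    have h' : (∫ x in Set.Ico (0:ℝ) (2*Δ), mexp S x) + A * J = J := by
      rw [← hshift]; exact hsplit.symm
    exact eq_sub_of_add_eq h'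
  -- kernel as CLM of a matrix integral
  have hGc : Continuous fun w : ℝ => mexp S (Δ - w) + mexp S (Δ + w) :=
    (hFcont.comp (continuous_const.sub continuous_id)).add
      (hFcont.comp (continuous_const.add continuous_id))
  have hL2app : ∀ B, (LinearMap.toContinuousLinearMap (FK.sandwich a s 1 C)) B
      = (a ᵥ* (B * C)) ⬝ᵥ s := fun B => by
    simp [LinearMap.coe_toContinuousLinearMap', FK.sandwich_apply, one_mul]
  have hkL : ∀ w : ℝ, foldedKernel S a s Δ w
      = (LinearMap.toContinuousLinearMap (FK.sandwich a s 1 C))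
          (mexp S (Δ - w) + mexp S (Δ + w)) := by
    intro w
    rw [hL2app, foldedKernel, Matrix.vecMul_vecMul]
  have hKcont : Continuous (foldedKernel S a s Δ) := by
    have := (LinearMap.toContinuousLinearMap (FK.sandwich a s 1 C)).continuous.comp hGc
    refine Continuous.congr this fun w => (hkL w).symm
  -- the half-period fold
  have hii : ∀ c : ℝ, IntervalIntegrable (fun x => mexp S (c - x)) volume 0 Δ :=
    fun c => ((hFcont.comp (continuous_const.sub continuous_id))).intervalIntegrable 0 Δ
  have hii2 : ∀ c : ℝ, IntervalIntegrable (fun x => mexp S (c + x)) volume 0 Δ :=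
    fun c => ((hFcont.comp (continuous_const.add continuous_id))).intervalIntegrable 0 Δ
  have hfold : (∫ w in Set.Icc (0:ℝ) Δ, (mexp S (Δ - w) + mexp S (Δ + w)))
      = ∫ x in Set.Ico (0:ℝ) (2*Δ), mexp S x := by
    rw [MeasureTheory.integral_Icc_eq_integral_Ioc, ← intervalIntegral.integral_of_le hΔ.le]
    rw [intervalIntegral.integral_add (hii Δ) (hii2 Δ)]
    have e1 : (∫ w in (0:ℝ)..Δ, mexp S (Δ - w)) = ∫ x in (0:ℝ)..Δ, mexp S x := by
      rw [intervalIntegral.integral_comp_sub_left (fun x => mexp S x) Δ]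
      norm_num
    have e2 : (∫ w in (0:ℝ)..Δ, mexp S (Δ + w)) = ∫ x in Δ..(2*Δ), mexp S x := by
      rw [intervalIntegral.integral_comp_add_left (fun x => mexp S x) Δ]
      norm_num
      ring_nf
    rw [e1, e2, intervalIntegral.integral_add_adjacent_intervals
      (hFcont.intervalIntegrable 0 Δ) (hFcont.intervalIntegrable Δ (2*Δ))]
    rw [intervalIntegral.integral_of_le (by linarith), MeasureTheory.integral_Ioc_eq_integral_Ioo,
      ← MeasureTheory.integral_Ico_eq_integral_Ioo]
  have hFA : ∀ x : ℝ, A * mexp S x = mexp S x * A := by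
    intro x
    rw [hA, ← FK.mexp_add, ← FK.mexp_add, add_comm]
  have hAJ : A * J = J * A := by
    rw [hJ, ← FK.integral_mulLeft hFint, ← FK.integral_mulRight hFint]
    exact setIntegral_congr_fun measurableSet_Ici fun x _ => hFA x
  have hJAC : (J - A * J) * C = J := by
    have h : J - A * J = J * ((1 : Matrix (Fin p) (Fin p) ℝ) - A) := by
      rw [mul_sub, mul_one, hAJ]
    rw [h, mul_assoc, hC1, mul_one]
  have hint2 : (∫ w in Set.Icc (0:ℝ) Δ, foldedKernel S a s Δ w) = 1 := by
    have hGint : IntegrableOn (fun w => mexp S (Δ - w) + mexp S (Δ + w)) (Set.Icc (0:ℝ) Δ) :=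
      hGc.integrableOn_Icc
    calc (∫ w in Set.Icc (0:ℝ) Δ, foldedKernel S a s Δ w)
        = ∫ w in Set.Icc (0:ℝ) Δ, (LinearMap.toContinuousLinearMap (FK.sandwich a s 1 C))
            (mexp S (Δ - w) + mexp S (Δ + w)) := by
          exact setIntegral_congr_fun measurableSet_Icc fun w _ => hkL w
      _ = (LinearMap.toContinuousLinearMap (FK.sandwich a s 1 C))
            (∫ w in Set.Icc (0:ℝ) Δ, (mexp S (Δ - w) + mexp S (Δ + w))) :=
          (LinearMap.toContinuousLinearMap (FK.sandwich a s 1 C)).integral_comp_comm hGint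
      _ = (LinearMap.toContinuousLinearMap (FK.sandwich a s 1 C)) (J - A * J) := by
          rw [hfold, hIco]
      _ = (a ᵥ* ((J - A * J) * C)) ⬝ᵥ s := hL2app _
      _ = (a ᵥ* J) ⬝ᵥ s := by rw [hJAC]
      _ = 1 := hJ1
  refine ⟨hpos, hint2, ?_⟩
  -- Part 3
  rintro g hg ⟨Cg, hCg⟩
  have hne : Nonempty (Set.Icc (0:ℝ) Δ) := ⟨⟨0, le_refl 0, hΔ.le⟩⟩
  have hbdd : BddAbove (Set.range fun w : Set.Icc (0:ℝ) Δ => |g (w:ℝ)|) := by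
    refine ⟨Cg, ?_⟩
    rintro y ⟨w, rfl⟩
    exact hCg w w.2
  have hMle : ∀ w ∈ Set.Icc (0:ℝ) Δ, |g w| ≤ ⨆ w : Set.Icc (0:ℝ) Δ, |g (w:ℝ)| :=
    fun w hw => le_ciSup hbdd (⟨w, hw⟩ : Set.Icc (0:ℝ) Δ)
  have hKint : IntegrableOn (foldedKernel S a s Δ) (Set.Icc (0:ℝ) Δ) := hKcont.integrableOn_Icc
  obtain ⟨CK, hCK⟩ := isCompact_Icc.exists_bound_of_continuousOn
    (hKcont.continuousOn : ContinuousOn (foldedKernel S a s Δ) (Set.Icc (0:ℝ) Δ))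
  have hCg0 : (0:ℝ) ≤ Cg := le_trans (abs_nonneg _) (hCg 0 ⟨le_refl 0, hΔ.le⟩)
  have hKg_int : IntegrableOn (fun w => foldedKernel S a s Δ w * g w) (Set.Icc (0:ℝ) Δ) := by
    apply Measure.integrableOn_of_bounded (M := CK * Cg)
    · exact (measure_Icc_lt_top).ne
    · exact ((hKcont.measurable.mul hg)).aestronglyMeasurable
    · refine (ae_restrict_iff' measurableSet_Icc).mpr (Filter.Eventually.of_forall fun w hw => ?_)
      rw [Real.norm_eq_abs, abs_mul]
      have h1 : |foldedKernel S a s Δ w| ≤ CK := by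
        have := hCK w hw
        rwa [Real.norm_eq_abs] at this
      exact mul_le_mul h1 (hCg w hw) (abs_nonneg _)
        (le_trans (abs_nonneg _) h1)
  calc |∫ w in Set.Icc (0:ℝ) Δ, foldedKernel S a s Δ w * g w|
      ≤ ∫ w in Set.Icc (0:ℝ) Δ, |foldedKernel S a s Δ w * g w| := by
        rw [← Real.norm_eq_abs]
        refine (norm_integral_le_integral_norm _).trans_eq ?_
        simp [Real.norm_eq_abs, abs_mul]
    _ ≤ ∫ w in Set.Icc (0:ℝ) Δ, foldedKernel S a s Δ w * (⨆ w : Set.Icc (0:ℝ) Δ, |g (w:ℝ)|) := by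
        refine setIntegral_mono_on hKg_int.abs (hKint.mul_const _) measurableSet_Icc ?_
        intro w hw
        rw [abs_mul, abs_of_nonneg (hpos w hw)]
        exact mul_le_mul_of_nonneg_left (hMle w hw) (hpos w hw)
    _ = ⨆ w : Set.Icc (0:ℝ) Δ, |g (w:ℝ)| := by
        rw [MeasureTheory.integral_mul_const, hint2, one_mul]
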